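/- If the weights do not alter the ordering of the p-values, i.e., the permutation τ sorting the raw p-values also sorts the weighted p-values (p_{τ(1)}/w_{τ(1)} ≤ … ≤ p_{τ(m)}/w_{τ(m)}), then WHP and WAP coincide: for every index i ∈ {1,…,m}, WHP rejects H_i if and only if WAP rejects H_i. -/

import Mathlib

open Finset

/-- The weighted Holm procedure (WHP): given a permutation `σ` sorting the weighted
p-values `p i / w i` increasingly, it rejects hypothesis `H_{σ r}` iff
`p (σ j) / w (σ j) ≤ α / ∑_{k=j}^{m} w (σ k)` for all `j ≤ r`. -/
def whpRejects (m : ℕ) (p w : Fin m → ℝ) (α : ℝ) (σ : Equiv.Perm (Fin m)) (i : Fin m) : Prop :=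
  ∃ r : Fin m, σ r = i ∧
    ∀ j ≤ r, p (σ j) / w (σ j) ≤ α / ∑ k ∈ Finset.Ici j, w (σ k)

/-- The weighted alternative Holm procedure (WAP): given a permutation `τ` sorting the raw
p-values increasingly, it rejects hypothesis `H_{τ r}` iff
`p (τ j) ≤ w (τ j) * α / ∑_{k=j}^{m} w (τ k)` for all `j ≤ r`. -/
def wapRejects (m : ℕ) (p w : Fin m → ℝ) (α : ℝ) (τ : Equiv.Perm (Fin m)) (i : Fin m) : Prop :=
  ∃ r : Fin m, τ r = i ∧
    ∀ j ≤ r, p (τ j) ≤ w (τ j) * α / ∑ k ∈ Finset.Ici j, w (τ k)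

/-- if the permutation `τ` sorting the raw p-values also sorts the weighted
p-values (i.e. the weights do not alter the ordering of the p-values), then WHP and WAP
coincide: for every index `i`, WHP rejects `H_i` iff WAP rejects `H_i`. -/
theorem whp_eq_wap_of_same_order (m : ℕ) (hm : 1 ≤ m) (p w : Fin m → ℝ) (α : ℝ)
    (hp : ∀ i, p i ∈ Set.Icc (0 : ℝ) 1) (hw : ∀ i, 0 < w i)
    (hα : α ∈ Set.Ioo (0 : ℝ) 1)
    (hpdist : Function.Injective p)
    (hptdist : Function.Injective fun i => p i / w i)
    (σ : Equiv.Perm (Fin m)) (hσ : Monotone fun j => p (σ j) / w (σ j))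
    (τ : Equiv.Perm (Fin m)) (hτ : Monotone fun j => p (τ j))
    (hτw : Monotone fun j => p (τ j) / w (τ j))
    (i : Fin m) :
    whpRejects m p w α σ i ↔ wapRejects m p w α τ i := by

  -- First show σ = τ.
  have hgσ : StrictMono fun j => p (σ j) / w (σ j) :=
    hσ.strictMono_of_injective (hptdist.comp σ.injective)
  have hgτ : StrictMono fun j => p (τ j) / w (τ j) :=
    hτw.strictMono_of_injective (hptdist.comp τ.injective)
  have hrange : Set.range (fun j => p (σ j) / w (σ j))
      = Set.range (fun j => p (τ j) / w (τ j)) := by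
    have h1 : (fun j => p (σ j) / w (σ j)) = (fun i => p i / w i) ∘ σ := rfl
    have h2 : (fun j => p (τ j) / w (τ j)) = (fun i => p i / w i) ∘ τ := rfl
    rw [h1, h2, Set.range_comp, Set.range_comp, σ.surjective.range_eq, τ.surjective.range_eq]
  have hστ : σ = τ := by
    have := (hgσ.range_inj hgτ).mp hrange
    ext j : 1
    exact hptdist (congrFun this j)
  subst hστ
  have hiff : ∀ j : Fin m,
      (p (σ j) / w (σ j) ≤ α / ∑ k ∈ Finset.Ici j, w (σ k))
      ↔ (p (σ j) ≤ w (σ j) * α / ∑ k ∈ Finset.Ici j, w (σ k)) := by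
    intro j
    have hS : 0 < ∑ k ∈ Finset.Ici j, w (σ k) :=
      Finset.sum_pos (fun k _ => hw _) ⟨j, Finset.mem_Ici.mpr le_rfl⟩
    rw [div_le_div_iff₀ (hw _) hS, le_div_iff₀ hS]
    constructor <;> intro h <;> nlinarith [hw (σ j)]
  constructor
  · rintro ⟨r, hr, h⟩
    exact ⟨r, hr, fun j hj => (hiff j).mp (h j hj)⟩
  · rintro ⟨r, hr, h⟩
    exact ⟨r, hr, fun j hj => (hiff j).mpr (h j hj)⟩
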